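/- Let A and B be square ℕ-matrices with no zero rows. If the one-sided edge shifts (X_A, σ_A) and (X_B, σ_B) are Matsumoto eventually conjugate, then A and B are unitally shift equivalent. -/

import Mathlib

open Matrix

/-- `(R,S)` is a shift equivalence of lag `l` from the `n × n` ℕ-matrix `A` to the
`m × m` ℕ-matrix `B`. -/
def IsShiftEquivalence {n m : ℕ} (A : Matrix (Fin n) (Fin n) ℕ) (B : Matrix (Fin m) (Fin m) ℕ)
    (R : Matrix (Fin n) (Fin m) ℕ) (S : Matrix (Fin m) (Fin n) ℕ) (l : ℕ) : Prop :=
  1 ≤ l ∧ A ^ l = R * S ∧ B ^ l = S * R ∧ A * R = R * B ∧ B * S = S * A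

/-- `(R,S)` is a unital shift equivalence of lag `l` from `A` to `B`:
a shift equivalence such that `(Bᵀ)^p Rᵀ 𝟙 = (Bᵀ)^(p+q) 𝟙` for some `p q : ℕ`. -/
def IsUnitalShiftEquivalence {n m : ℕ} (A : Matrix (Fin n) (Fin n) ℕ)
    (B : Matrix (Fin m) (Fin m) ℕ)
    (R : Matrix (Fin n) (Fin m) ℕ) (S : Matrix (Fin m) (Fin n) ℕ) (l : ℕ) : Prop :=
  IsShiftEquivalence A B R S l ∧
    ∃ p q : ℕ, (Bᵀ ^ p) *ᵥ (Rᵀ *ᵥ fun _ => 1) = (Bᵀ ^ (p + q)) *ᵥ (fun _ => 1)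

/-- `A` and `B` are unitally shift equivalent. -/
def UnitallyShiftEquivalent {n m : ℕ} (A : Matrix (Fin n) (Fin n) ℕ)
    (B : Matrix (Fin m) (Fin m) ℕ) : Prop :=
  ∃ (l : ℕ) (R : Matrix (Fin n) (Fin m) ℕ) (S : Matrix (Fin m) (Fin n) ℕ),
    IsUnitalShiftEquivalence A B R S l

/-- `A` and `B` are shift equivalent. -/
def ShiftEquivalent {n m : ℕ} (A : Matrix (Fin n) (Fin n) ℕ)
    (B : Matrix (Fin m) (Fin m) ℕ) : Prop :=
  ∃ (l : ℕ) (R : Matrix (Fin n) (Fin m) ℕ) (S : Matrix (Fin m) (Fin n) ℕ),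
    IsShiftEquivalence A B R S l

/-- The edge set of the graph of `A`: `A i j` edges from vertex `i` to vertex `j`.
The source of an edge `⟨i, j, e⟩` is `i` and its range is `j`. -/
def EdgeType {n : ℕ} (A : Matrix (Fin n) (Fin n) ℕ) : Type :=
  (i : Fin n) × (j : Fin n) × Fin (A i j)

/-- The edge set carries the discrete topology. -/
instance {n : ℕ} (A : Matrix (Fin n) (Fin n) ℕ) : TopologicalSpace (EdgeType A) := ⊥

/-- The one-sided edge shift space `X_A`, a subspace of the product space `(E¹)^ℕ`. -/
def ShiftSpace {n : ℕ} (A : Matrix (Fin n) (Fin n) ℕ) : Type :=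
  { x : ℕ → EdgeType A // ∀ i : ℕ, (x i).2.1 = (x (i + 1)).1 }

instance {n : ℕ} (A : Matrix (Fin n) (Fin n) ℕ) : TopologicalSpace (ShiftSpace A) :=
  instTopologicalSpaceSubtype

/-- The shift map `σ_A : X_A → X_A`. -/
def shiftMap {n : ℕ} (A : Matrix (Fin n) (Fin n) ℕ) : ShiftSpace A → ShiftSpace A :=
  fun x => ⟨fun i => x.1 (i + 1), fun i => x.2 (i + 1)⟩

/-- `A` has no zero rows. -/
def NoZeroRows {n : ℕ} (A : Matrix (Fin n) (Fin n) ℕ) : Prop :=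
  ∀ i, ∃ j, A i j ≠ 0

/-- A point `x` is eventually periodic for `σ` if `σ^p x = σ^q x` for some distinct `p, q`. -/
def EventuallyPeriodic {X : Type*} (σ : X → X) (x : X) : Prop :=
  ∃ p q : ℕ, p ≠ q ∧ σ^[p] x = σ^[q] x

namespace SE

variable {k : ℕ} {M : Matrix (Fin k) (Fin k) ℕ}

instance : DiscreteTopology (EdgeType M) := ⟨rfl⟩

instance : Finite (EdgeType M) := by
  unfold EdgeType
  haveI : ∀ i j : Fin k, Finite (Fin (M i j)) := fun i j => Finite.of_fintype _
  infer_instance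

noncomputable instance : Fintype (EdgeType M) := Fintype.ofFinite _

lemma shift_coord (x : ShiftSpace M) (j : ℕ) : (shiftMap M x).1 j = x.1 (j + 1) := rfl

lemma iter_coord (a : ℕ) (x : ShiftSpace M) (j : ℕ) :
    ((shiftMap M)^[a] x).1 j = x.1 (a + j) := by
  induction a generalizing x with
  | zero => simp
  | succ a ih =>
    rw [Function.iterate_succ_apply, ih (shiftMap M x), shift_coord]
    exact congrArg x.1 (by omega)

lemma pt_ext {x y : ShiftSpace M} (h : ∀ j, x.1 j = y.1 j) : x = y :=
  Subtype.ext (funext h)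

lemma pt_ext_iter {T : ℕ} {x y : ShiftSpace M} (h1 : ∀ j < T, x.1 j = y.1 j)
    (h2 : (shiftMap M)^[T] x = (shiftMap M)^[T] y) : x = y := by
  refine pt_ext fun j => ?_
  rcases lt_or_ge j T with hj | hj
  · exact h1 j hj
  · have := congrArg (fun z : ShiftSpace M => z.1 (j - T)) h2
    simpa [iter_coord, Nat.add_sub_cancel' hj] using this

lemma continuous_coord (j : ℕ) : Continuous fun x : ShiftSpace M => x.1 j :=
  (continuous_apply j).comp continuous_subtype_val

instance : CompactSpace (ShiftSpace M) := by
  have : IsClosed {x : ℕ → EdgeType M | ∀ i : ℕ, (x i).2.1 = (x (i + 1)).1} := by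
    have : {x : ℕ → EdgeType M | ∀ i : ℕ, (x i).2.1 = (x (i + 1)).1} =
        ⋂ i : ℕ, {x : ℕ → EdgeType M | (x i).2.1 = (x (i + 1)).1} := by
      ext x; simp
    rw [this]
    refine isClosed_iInter fun i => ?_
    have hf : Continuous fun x : ℕ → EdgeType M => (x i, x (i + 1)) :=
      (continuous_apply i).prodMk (continuous_apply (i + 1))
    have : {x : ℕ → EdgeType M | (x i).2.1 = (x (i + 1)).1} =
        (fun x : ℕ → EdgeType M => (x i, x (i + 1))) ⁻¹'
          {p : EdgeType M × EdgeType M | p.1.2.1 = p.2.1} := rfl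
    rw [this]
    exact (isClosed_discrete _).preimage hf
  exact isCompact_iff_compactSpace.mp this.isCompact

noncomputable def nxt (hM : NoZeroRows M) (i : Fin k) : EdgeType M :=
  ⟨i, (hM i).choose, ⟨0, Nat.pos_of_ne_zero (hM i).choose_spec⟩⟩

@[simp] lemma nxt_src (hM : NoZeroRows M) (i : Fin k) : (nxt hM i).1 = i := rfl

noncomputable def stdPoint (hM : NoZeroRows M) (i : Fin k) : ShiftSpace M :=
  ⟨fun t => Nat.rec (nxt hM i) (fun _ e => nxt hM e.2.1) t, fun _ => rfl⟩

@[simp] lemma stdPoint_src (hM : NoZeroRows M) (i : Fin k) :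
    ((stdPoint hM i).1 0).1 = i := rfl

/-- Words of length `T`. -/
def Ext {T : ℕ} (p : Fin T → EdgeType M) (x : ShiftSpace M) : Prop :=
  ∀ j : Fin T, x.1 j = p j

def EndV {T : ℕ} (p : Fin (T + 1) → EdgeType M) : Fin k := (p (Fin.last T)).2.1

/-- Internal composability of a word. -/
def Comp {T : ℕ} (p : Fin T → EdgeType M) : Prop :=
  ∀ (j : ℕ) (hj : j + 1 < T), (p ⟨j, by omega⟩).2.1 = (p ⟨j + 1, hj⟩).1

lemma comp_of_ext {T : ℕ} {p : Fin T → EdgeType M} {x : ShiftSpace M}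
    (hx : Ext p x) : Comp p := by
  intro j hj
  rw [← hx ⟨j, by omega⟩, ← hx ⟨j + 1, hj⟩]
  exact x.2 j

def glue {T : ℕ} (p : Fin (T + 1) → EdgeType M) (z : ShiftSpace M)
    (hp : Comp p) (hz : (z.1 0).1 = EndV p) : ShiftSpace M :=
  ⟨fun j => if h : j < T + 1 then p ⟨j, h⟩ else z.1 (j - (T + 1)), by
    intro i
    dsimp only
    rcases lt_or_ge (i + 1) (T + 1) with h1 | h1
    · rw [dif_pos (by omega : i < T + 1), dif_pos h1]
      exact hp i h1
    · rcases eq_or_lt_of_le h1 with h2 | h2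
      · rw [dif_pos (by omega : i < T + 1), dif_neg (by omega)]
        have hi : i = T := by omega
        subst hi
        have h0 : i + 1 - (i + 1) = 0 := by omega
        rw [h0, hz]
        rfl
      · rw [dif_neg (by omega), dif_neg (by omega)]
        have h3 : i + 1 - (T + 1) = (i - (T + 1)) + 1 := by omega
        rw [h3]
        exact z.2 (i - (T + 1))⟩

lemma glue_ext {T : ℕ} (p : Fin (T + 1) → EdgeType M) (z : ShiftSpace M)
    (hp : Comp p) (hz : (z.1 0).1 = EndV p) : Ext p (glue p z hp hz) := by
  intro j
  show dite _ _ _ = _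
  rw [dif_pos j.isLt]

lemma glue_coord_ge {T : ℕ} (p : Fin (T + 1) → EdgeType M) (z : ShiftSpace M)
    (hp : Comp p) (hz : (z.1 0).1 = EndV p) (j : ℕ) :
    (glue p z hp hz).1 (T + 1 + j) = z.1 j := by
  show (if h : (T + 1 + j) < T + 1 then p ⟨T + 1 + j, h⟩
      else z.1 (T + 1 + j - (T + 1))) = z.1 j
  have harg : T + 1 + j - (T + 1) = j := by omega
  rw [dif_neg (by omega), harg]

lemma glue_shift {T : ℕ} (p : Fin (T + 1) → EdgeType M) (z : ShiftSpace M)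
    (hp : Comp p) (hz : (z.1 0).1 = EndV p) :
    (shiftMap M)^[T + 1] (glue p z hp hz) = z := by
  refine pt_ext fun j => ?_
  rw [iter_coord, glue_coord_ge]

lemma exists_ext (hM : NoZeroRows M) {T : ℕ} (p : Fin (T + 1) → EdgeType M)
    (hp : Comp p) : ∃ x, Ext p x :=
  ⟨glue p (stdPoint hM (EndV p)) hp (by simp), glue_ext _ _ _ _⟩
def Det (T : ℕ) (U : Set (ShiftSpace M)) : Prop :=
  ∀ x y : ShiftSpace M, (∀ j < T, x.1 j = y.1 j) → x ∈ U → y ∈ U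

lemma Det.mono {T T' : ℕ} (hTT : T ≤ T') {U : Set (ShiftSpace M)} (hU : Det T U) :
    Det T' U :=
  fun x y hxy hx => hU x y (fun j hj => hxy j (lt_of_lt_of_le hj hTT)) hx

lemma Det.union {T : ℕ} {U V : Set (ShiftSpace M)} (hU : Det T U) (hV : Det T V) :
    Det T (U ∪ V) := by
  intro x y hxy hx
  rcases hx with hx | hx
  · exact Or.inl (hU x y hxy hx)
  · exact Or.inr (hV x y hxy hx)

lemma Det.biUnion {T : ℕ} {ι : Type*} {s : Finset ι} {V : ι → Set (ShiftSpace M)}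
    (hV : ∀ i, Det T (V i)) : Det T (⋃ i ∈ s, V i) := by
  intro x y hxy hx
  rw [Set.mem_iUnion₂] at hx ⊢
  obtain ⟨i, hi, hx⟩ := hx
  exact ⟨i, hi, hV i x y hxy hx⟩

noncomputable def Cnt (M : Matrix (Fin k) (Fin k) ℕ) (T : ℕ) (U : Set (ShiftSpace M)) (u : Fin k) : ℕ :=
  Nat.card {p : Fin (T + 1) → EdgeType M // (∃ x ∈ U, Ext p x) ∧ EndV p = u}

lemma card_edge (v u : Fin k) :
    Nat.card {e : EdgeType M // e.1 = v ∧ e.2.1 = u} = M v u := by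
  refine Nat.card_eq_of_equiv_fin ?_
  refine ⟨fun x => Fin.cast (by obtain ⟨⟨a, b, c⟩, h1, h2⟩ := x; cases h1; cases h2; rfl) x.1.2.2,
    fun c => ⟨⟨v, u, c⟩, rfl, rfl⟩, ?_, ?_⟩
  · rintro ⟨⟨a, b, c⟩, h1, h2⟩
    dsimp only at h1 h2
    subst h1; subst h2
    rfl
  · intro c; rfl

def partEquiv {α : Type*} (Q : α → Prop) {β : Type*} (g : α → β) :
    {a // Q a} ≃ Σ b, {a // Q a ∧ g a = b} where
  toFun a := ⟨g a.1, a.1, a.2, rfl⟩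
  invFun s := ⟨s.2.1, s.2.2.1⟩
  left_inv a := rfl
  right_inv := by rintro ⟨b, a, ha, rfl⟩; rfl

lemma card_part {α : Type*} [Fintype α] (Q : α → Prop) (g : α → Fin k) :
    Nat.card {a // Q a} = ∑ u, Nat.card {a // Q a ∧ g a = u} := by
  classical
  have h1 : Nat.card {a // Q a} = (Finset.univ.filter Q).card := by
    rw [Nat.card_eq_fintype_card, Fintype.card_subtype]
  rw [h1, Finset.card_eq_sum_card_fiberwise (fun x _ => Finset.mem_univ (g x))]
  refine Finset.sum_congr rfl fun u _ => ?_
  rw [Nat.card_eq_fintype_card, Fintype.card_subtype, Finset.filter_filter]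

lemma sum_fiber {α : Type*} [Fintype α] (Q : α → Prop) [DecidablePred Q]
    (g : α → Fin k) (f : Fin k → ℕ) :
    ∑ a : {a // Q a}, f (g a.1) = ∑ u, Nat.card {a // Q a ∧ g a = u} * f u := by
  classical
  rw [← Finset.sum_subtype (Finset.univ.filter Q) (by simp) (fun a => f (g a))]
  rw [← Finset.sum_fiberwise (Finset.univ.filter Q) g (fun a => f (g a))]
  refine Finset.sum_congr rfl fun u _ => ?_
  have hc : ∀ a ∈ (Finset.univ.filter Q).filter (fun a => g a = u), f (g a) = f u := by
    intro a ha
    rw [Finset.mem_filter] at ha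
    rw [ha.2]
  rw [Finset.sum_congr rfl hc, Finset.sum_const, Finset.filter_filter, smul_eq_mul]
  congr 1
  rw [Nat.card_eq_fintype_card, Fintype.card_subtype]
lemma snoc_coord_lt {T : ℕ} (q : Fin (T + 1) → EdgeType M) (e : EdgeType M)
    (j : ℕ) (hj : j < T + 1) (hj2 : j < T + 2) :
    (Fin.snoc q e : Fin (T + 2) → EdgeType M) ⟨j, hj2⟩ = q ⟨j, hj⟩ := by
  have : (⟨j, hj2⟩ : Fin (T + 2)) = Fin.castSucc ⟨j, hj⟩ := rfl
  rw [this, Fin.snoc_castSucc]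

lemma cnt_succ (hM : NoZeroRows M) {T : ℕ} {U : Set (ShiftSpace M)}
    (hU : Det (T + 1) U) (u : Fin k) :
    Cnt M (T + 1) U u = ∑ v, Cnt M T U v * M v u := by
  rw [Cnt, card_part _ (fun p => (p (Fin.last (T + 1))).1)]
  refine Finset.sum_congr rfl fun v _ => ?_
  rw [Cnt, ← card_edge (M := M) v u, ← Nat.card_prod]
  have hcond : ∀ w : {p : Fin (T + 1) → EdgeType M // (∃ x ∈ U, Ext p x) ∧ EndV p = v} ×
      {e : EdgeType M // e.1 = v ∧ e.2.1 = u},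
      ((∃ x ∈ U, Ext (Fin.snoc w.1.1 w.2.1 : Fin (T + 2) → EdgeType M) x) ∧
        EndV (Fin.snoc w.1.1 w.2.1 : Fin (T + 2) → EdgeType M) = u) ∧
      ((Fin.snoc w.1.1 w.2.1 : Fin (T + 2) → EdgeType M) (Fin.last (T + 1))).1 = v := by
    rintro ⟨⟨q, ⟨x, hxU, hxq⟩, hEndq⟩, ⟨e, he1, he2⟩⟩
    have hcomp : Comp (Fin.snoc q e : Fin (T + 2) → EdgeType M) := by
      intro j hj
      rcases lt_or_ge (j + 1) (T + 1) with h1 | h1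
      · rw [snoc_coord_lt q e j (by omega) (by omega), snoc_coord_lt q e (j + 1) h1 hj]
        exact comp_of_ext hxq j h1
      · have hjT : j = T := by omega
        have h2 : (⟨j + 1, hj⟩ : Fin (T + 2)) = Fin.last (T + 1) := by
          apply Fin.ext; simp [hjT]
        have h3 : (⟨j, by omega⟩ : Fin (T + 1)) = Fin.last T := by
          apply Fin.ext; simp [hjT]
        rw [snoc_coord_lt q e j (by omega) (by omega), h2, Fin.snoc_last, h3, he1]
        exact hEndq
    have hEnd : EndV (Fin.snoc q e : Fin (T + 2) → EdgeType M) = u := by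
      rw [EndV, Fin.snoc_last]; exact he2
    refine ⟨⟨⟨glue _ (stdPoint hM _) hcomp (stdPoint_src hM _), ?_, glue_ext _ _ _ _⟩, hEnd⟩, ?_⟩
    · refine hU x _ (fun j hj => ?_) hxU
      have h1 := glue_ext _ (stdPoint hM (EndV (Fin.snoc q e : Fin (T + 2) → EdgeType M)))
        hcomp (stdPoint_src hM _) ⟨j, by omega⟩
      rw [h1, snoc_coord_lt q e j hj (by omega)]
      exact hxq ⟨j, hj⟩
    · show ((Fin.snoc q e : Fin (T + 2) → EdgeType M) (Fin.last (T + 1))).1 = v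
      rw [Fin.snoc_last]; exact he1
  refine (Nat.card_eq_of_bijective (fun w => ⟨_, hcond w⟩) ⟨?_, ?_⟩).symm
  · -- injective
    rintro ⟨⟨q, hq⟩, ⟨e, he⟩⟩ ⟨⟨q', hq'⟩, ⟨e', he'⟩⟩ hw
    have hval : (Fin.snoc q e : Fin (T + 2) → EdgeType M) = Fin.snoc q' e' :=
      congrArg Subtype.val hw
    have hqq : q = q' := by
      funext i
      have := congrFun hval (Fin.castSucc i)
      rwa [Fin.snoc_castSucc, Fin.snoc_castSucc] at this
    have hee : e = e' := by
      have := congrFun hval (Fin.last (T + 1))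
      rwa [Fin.snoc_last, Fin.snoc_last] at this
    subst hqq; subst hee; rfl
  · -- surjective
    rintro ⟨p, ⟨⟨x, hxU, hxp⟩, hEnd⟩, hv⟩
    have hinit : Ext (Fin.init p) x := by
      intro i
      have := hxp (Fin.castSucc i)
      simpa [Fin.init_def] using this
    have hEndInit : EndV (Fin.init p) = v := by
      have h1 : x.1 T = p (Fin.castSucc (Fin.last T)) := by
        have := hxp (Fin.castSucc (Fin.last T)); simpa using this
      have h2 : x.1 (T + 1) = p (Fin.last (T + 1)) := by
        have := hxp (Fin.last (T + 1)); simpa using this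
      have h3 := x.2 T
      rw [h1, h2] at h3
      show (Fin.init p (Fin.last T)).2.1 = v
      rw [Fin.init_def, h3]
      exact hv
    refine ⟨(⟨Fin.init p, ⟨x, hxU, hinit⟩, hEndInit⟩, ⟨p (Fin.last (T + 1)), hv, hEnd⟩), ?_⟩
    apply Subtype.ext
    exact Fin.snoc_init_self p
lemma cnt_congr {T : ℕ} {U V : Set (ShiftSpace M)} (h : U = V) (u : Fin k) :
    Cnt M T U u = Cnt M T V u := by rw [h]

lemma cnt_empty {T : ℕ} (u : Fin k) : Cnt M T (∅ : Set (ShiftSpace M)) u = 0 := by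
  rw [Cnt]
  have : IsEmpty {p : Fin (T + 1) → EdgeType M //
      (∃ x ∈ (∅ : Set (ShiftSpace M)), Ext p x) ∧ EndV p = u} := by
    constructor
    rintro ⟨p, ⟨x, hx, _⟩, _⟩
    exact hx
  exact Nat.card_of_isEmpty

lemma cnt_union {T : ℕ} {U V : Set (ShiftSpace M)} (hUV : Disjoint U V)
    (hU : Det (T + 1) U) (hV : Det (T + 1) V) (u : Fin k) :
    Cnt M T (U ∪ V) u = Cnt M T U u + Cnt M T V u := by
  classical
  rw [Cnt, Cnt, Cnt, ← Nat.card_sum]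
  apply Nat.card_congr
  refine (Equiv.subtypeEquivRight ?_).trans (subtypeOrEquiv _ _ ?_)
  · intro p
    constructor
    · rintro ⟨⟨x, hx | hx, hex⟩, hE⟩
      · exact Or.inl ⟨⟨x, hx, hex⟩, hE⟩
      · exact Or.inr ⟨⟨x, hx, hex⟩, hE⟩
    · rintro (⟨⟨x, hx, hex⟩, hE⟩ | ⟨⟨x, hx, hex⟩, hE⟩)
      · exact ⟨⟨x, Or.inl hx, hex⟩, hE⟩
      · exact ⟨⟨x, Or.inr hx, hex⟩, hE⟩
  · rw [disjoint_iff_inf_le]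
    rintro p ⟨⟨⟨x, hx, hex⟩, hE⟩, ⟨⟨y, hy, hey⟩, _⟩⟩
    have hxy : ∀ j < T + 1, x.1 j = y.1 j := by
      intro j hj
      rw [hex ⟨j, hj⟩, hey ⟨j, hj⟩]
    exact Set.disjoint_left.mp hUV (hU x y hxy hx) hy

lemma cnt_biUnion {T : ℕ} {ι : Type*} [DecidableEq ι] (s : Finset ι)
    (V : ι → Set (ShiftSpace M)) (hdet : ∀ i, Det (T + 1) (V i))
    (hdisj : ∀ i ∈ s, ∀ j ∈ s, i ≠ j → Disjoint (V i) (V j)) (u : Fin k) :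
    Cnt M T (⋃ i ∈ s, V i) u = ∑ i ∈ s, Cnt M T (V i) u := by
  classical
  induction s using Finset.induction with
  | empty => simpa using cnt_empty u
  | @insert a s ha ih =>
    have h1 : (⋃ i ∈ insert a s, V i) = V a ∪ ⋃ i ∈ s, V i := by
      simp [Set.biUnion_insert]
    have hdisj2 : Disjoint (V a) (⋃ i ∈ s, V i) := by
      rw [Set.disjoint_iUnion₂_right]
      intro i hi
      exact hdisj a (Finset.mem_insert_self a s) i (Finset.mem_insert_of_mem hi)
        (fun hai => ha (hai ▸ hi))
    rw [h1, cnt_union hdisj2 (hdet a) (Det.biUnion hdet), Finset.sum_insert ha,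
      ih (fun i hi => fun j hj => hdisj i (Finset.mem_insert_of_mem hi) j
        (Finset.mem_insert_of_mem hj))]

lemma det_vtx (i : Fin k) (T : ℕ) : Det (T + 1) {x : ShiftSpace M | (x.1 0).1 = i} := by
  intro x y hxy hx
  show (y.1 0).1 = i
  rw [← hxy 0 (by omega)]
  exact hx

lemma cnt_vtx (hM : NoZeroRows M) (T : ℕ) (i i' : Fin k) :
    Cnt M T {x : ShiftSpace M | (x.1 0).1 = i} i' = (M ^ (T + 1)) i i' := by
  induction T generalizing i' with
  | zero =>
    rw [pow_one, Cnt, ← card_edge (M := M) i i']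
    have hcond : ∀ e : {e : EdgeType M // e.1 = i ∧ e.2.1 = i'},
        (∃ x ∈ {x : ShiftSpace M | (x.1 0).1 = i}, Ext (fun _ : Fin 1 => e.1) x) ∧
          EndV (fun _ : Fin 1 => e.1) = i' := by
      rintro ⟨e, he1, he2⟩
      have hcomp : Comp (fun _ : Fin 1 => e) := by intro j hj; omega
      refine ⟨⟨glue _ (stdPoint hM _) hcomp (stdPoint_src hM _), ?_, glue_ext _ _ _ _⟩, he2⟩
      show ((glue _ (stdPoint hM _) hcomp (stdPoint_src hM _)).1 0).1 = i
      have h0 := glue_ext (fun _ : Fin 1 => e) (stdPoint hM _) hcomp (stdPoint_src hM _)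
        ⟨0, by omega⟩
      rw [h0]
      exact he1
    refine (Nat.card_eq_of_bijective (fun e => ⟨fun _ => e.1, hcond e⟩) ⟨?_, ?_⟩).symm
    · rintro ⟨e, he⟩ ⟨e', he'⟩ hw
      have := congrFun (congrArg Subtype.val hw) 0
      exact Subtype.ext this
    · rintro ⟨p, ⟨x, hx, hex⟩, hE⟩
      have h1 : (p (Fin.last 0)).1 = i := by
        rw [← hex (Fin.last 0)]
        exact hx
      refine ⟨⟨p (Fin.last 0), h1, hE⟩, Subtype.ext ?_⟩
      funext j
      have hj : j = Fin.last 0 := by apply Fin.ext; omega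
      rw [hj]
  | succ T ih =>
    rw [cnt_succ hM ((det_vtx i 0).mono (by omega)), pow_succ, Matrix.mul_apply]
    exact Finset.sum_congr rfl fun v _ => by rw [ih]

lemma cnt_univ (hM : NoZeroRows M) (T : ℕ) (u : Fin k) :
    Cnt M T (Set.univ : Set (ShiftSpace M)) u = ∑ v, (M ^ (T + 1)) v u := by
  classical
  have hpart : (Set.univ : Set (ShiftSpace M)) =
      ⋃ i ∈ (Finset.univ : Finset (Fin k)), {x : ShiftSpace M | (x.1 0).1 = i} := by
    ext x
    simp only [Set.mem_univ, Set.mem_iUnion, true_iff]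
    exact ⟨(x.1 0).1, Finset.mem_univ _, rfl⟩
  rw [cnt_congr hpart, cnt_biUnion _ _ (fun i => (det_vtx i 0).mono (by omega)) ?_]
  · exact Finset.sum_congr rfl fun v _ => by rw [cnt_vtx hM]
  · intro i _ j _ hij
    rw [Set.disjoint_left]
    rintro x hx hx'
    exact hij (hx ▸ hx')
lemma cnt_image (θ : ShiftSpace M → ShiftSpace M)
    {V : Set (ShiftSpace M)} (l c t : ℕ) (hlc : l + c ≤ t)
    (hinj : Set.InjOn θ V)
    (htail : ∀ x ∈ V, ∀ j : ℕ, (θ x).1 (l + j) = x.1 (l + c + j))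
    (hdet : Det (t + 1) V)
    (hpre : ∀ x ∈ V, ∀ y ∈ V, (∀ j < t + 1, x.1 j = y.1 j) →
      ∀ j < l, (θ x).1 j = (θ y).1 j)
    (u : Fin k) :
    Cnt M (t - c) (θ '' V) u = Cnt M t V u := by
  have htail' : ∀ x ∈ V, ∀ j : ℕ, l ≤ j → (θ x).1 j = x.1 (j + c) := by
    intro x hx j hj
    have h0 := htail x hx (j - l)
    have h1 : l + (j - l) = j := by omega
    have h2 : l + c + (j - l) = j + c := by omega
    rw [h1, h2] at h0
    exact h0
  have factA : ∀ (p : Fin (t + 1) → EdgeType M), ∀ x ∈ V, Ext p x →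
      ∀ j : ℕ, l ≤ j → ∀ hj : j ≤ t - c, (θ x).1 j = p ⟨j + c, by omega⟩ := by
    intro p x hx hex j hjl hjr
    rw [htail' x hx j hjl]
    exact hex ⟨j + c, by omega⟩
  have hcond : ∀ w : {p : Fin (t + 1) → EdgeType M // (∃ x ∈ V, Ext p x) ∧ EndV p = u},
      (∃ y ∈ θ '' V, Ext (fun j : Fin (t - c + 1) => (θ w.2.1.choose).1 j) y) ∧
        EndV (fun j : Fin (t - c + 1) => (θ w.2.1.choose).1 j) = u := by
    intro w
    obtain ⟨hxV, hxp⟩ := w.2.1.choose_spec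
    refine ⟨⟨θ w.2.1.choose, Set.mem_image_of_mem θ hxV, fun j => rfl⟩, ?_⟩
    show ((θ w.2.1.choose).1 (t - c)).2.1 = u
    rw [factA w.1 w.2.1.choose hxV hxp (t - c) (by omega) le_rfl]
    have h4 : (⟨t - c + c, by omega⟩ : Fin (t + 1)) = Fin.last t := by
      apply Fin.ext; show t - c + c = t; omega
    rw [h4]
    exact w.2.2
  refine (Nat.card_eq_of_bijective
    (fun w => ⟨fun j : Fin (t - c + 1) => (θ w.2.1.choose).1 j, hcond w⟩) ⟨?_, ?_⟩).symm
  · -- injective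
    intro w w' hw
    obtain ⟨hxV, hxp⟩ := w.2.1.choose_spec
    obtain ⟨hxV', hxp'⟩ := w'.2.1.choose_spec
    set x := w.2.1.choose with hxd
    set x' := w'.2.1.choose with hxd'
    have hval : ∀ j : Fin (t - c + 1), (θ x).1 j = (θ x').1 j :=
      fun j => congrFun (congrArg Subtype.val hw) j
    have hagree : ∀ jn : ℕ, l + c ≤ jn → ∀ hjn : jn < t + 1,
        w.1 ⟨jn, hjn⟩ = w'.1 ⟨jn, hjn⟩ := by
      intro jn h1 h2
      have h4 : (⟨jn - c + c, by omega⟩ : Fin (t + 1)) = ⟨jn, h2⟩ := by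
        apply Fin.ext; show jn - c + c = jn; omega
      calc w.1 ⟨jn, h2⟩ = w.1 ⟨jn - c + c, by omega⟩ := by rw [h4]
        _ = (θ x).1 (jn - c) := (factA w.1 x hxV hxp (jn - c) (by omega) (by omega)).symm
        _ = (θ x').1 (jn - c) := hval ⟨jn - c, by omega⟩
        _ = w'.1 ⟨jn - c + c, by omega⟩ := factA w'.1 x' hxV' hxp' (jn - c) (by omega) (by omega)
        _ = w'.1 ⟨jn, h2⟩ := by rw [h4]
    have hcomp' : Comp w'.1 := comp_of_ext hxp'
    have hz : (((shiftMap M)^[t + 1] x).1 0).1 = EndV w'.1 := by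
      have h5 := x.2 t
      have h6 : x.1 t = w.1 (Fin.last t) := hxp (Fin.last t)
      have h7 : ((shiftMap M)^[t + 1] x).1 0 = x.1 (t + 1) := by
        rw [iter_coord]
      rw [h7, ← h5, h6]
      rw [show ((w.1 (Fin.last t)).2.1 = u) from w.2.2, show (EndV w'.1 = u) from w'.2.2]
    set y' := glue w'.1 ((shiftMap M)^[t + 1] x) hcomp' hz with hy'd
    have hy'p' : Ext w'.1 y' := glue_ext _ _ _ _
    have hy'V : y' ∈ V := by
      refine hdet x' y' (fun j hj => ?_) hxV'
      rw [hxp' ⟨j, hj⟩, hy'p' ⟨j, hj⟩]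
    have hθ : θ y' = θ x := by
      refine pt_ext fun j => ?_
      rcases lt_or_ge j l with hjl | hjl
      · have e1 := hpre y' hy'V x' hxV'
          (fun j0 hj0 => by rw [hy'p' ⟨j0, hj0⟩, hxp' ⟨j0, hj0⟩]) j hjl
        have e2 : (θ x).1 j = (θ x').1 j := hval ⟨j, by omega⟩
        rw [e1, ← e2]
      · rw [htail' y' hy'V j hjl, htail' x hxV j hjl]
        rcases lt_or_ge (j + c) (t + 1) with hj1 | hj1
        · calc y'.1 (j + c) = w'.1 ⟨j + c, hj1⟩ := hy'p' ⟨j + c, hj1⟩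
            _ = w.1 ⟨j + c, hj1⟩ := (hagree (j + c) (by omega) hj1).symm
            _ = x.1 (j + c) := (hxp ⟨j + c, hj1⟩).symm
        · calc y'.1 (j + c)
              = y'.1 (t + 1 + (j + c - (t + 1))) := congrArg y'.1 (by omega)
            _ = ((shiftMap M)^[t + 1] x).1 (j + c - (t + 1)) :=
                glue_coord_ge w'.1 ((shiftMap M)^[t + 1] x) hcomp' hz (j + c - (t + 1))
            _ = x.1 (t + 1 + (j + c - (t + 1))) := by rw [iter_coord]
            _ = x.1 (j + c) := congrArg x.1 (by omega)
    have hxy : x = y' := hinj hxV hy'V hθ.symm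
    apply Subtype.ext
    funext j
    calc w.1 j = x.1 j := (hxp j).symm
      _ = y'.1 j := by rw [hxy]
      _ = w'.1 j := hy'p' j
  · -- surjective
    rintro ⟨r, ⟨y, ⟨x, hxV, hyx⟩, hry⟩, hEndr⟩
    subst hyx
    have hexp : ∃ z ∈ V, Ext (fun j : Fin (t + 1) => x.1 j) z := ⟨x, hxV, fun j => rfl⟩
    have hEndp : EndV (fun j : Fin (t + 1) => x.1 j) = u := by
      show (x.1 t).2.1 = u
      have e1 : (θ x).1 (t - c) = x.1 (t - c + c) := htail' x hxV (t - c) (by omega)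
      have e2 : (θ x).1 (t - c) = r (Fin.last (t - c)) := hry (Fin.last (t - c))
      have e3 : x.1 t = r (Fin.last (t - c)) := by
        rw [← e2, e1]
        exact congrArg x.1 (by omega)
      rw [e3]
      exact hEndr
    refine ⟨⟨fun j : Fin (t + 1) => x.1 j, hexp, hEndp⟩, Subtype.ext ?_⟩
    funext j
    obtain ⟨hx0V, hx0p⟩ := hexp.choose_spec
    show (θ hexp.choose).1 j = r j
    rcases lt_or_ge (j : ℕ) l with hjl | hjl
    · have e1 := hpre hexp.choose hx0V x hxV
        (fun j0 hj0 => hx0p ⟨j0, hj0⟩) j hjl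
      rw [e1]
      exact hry j
    · have e1 := factA (fun j : Fin (t + 1) => x.1 j) hexp.choose hx0V hx0p j hjl
        (by omega)
      rw [e1]
      have e2 : r j = (θ x).1 j := (hry j).symm
      rw [e2, htail' x hxV j hjl]
lemma nbhd {U : Set (ShiftSpace M)} (hU : IsOpen U) {x : ShiftSpace M} (hx : x ∈ U) :
    ∃ w, ∀ y : ShiftSpace M, (∀ j < w, y.1 j = x.1 j) → y ∈ U := by
  have hind : IsOpen U ↔ ∃ t, IsOpen t ∧ Subtype.val ⁻¹' t = U := isOpen_induced_iff
  obtain ⟨VV, hVV, hVU⟩ := hind.mp hU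
  have hxV : x.1 ∈ VV := by rw [← hVU] at hx; exact hx
  rw [isOpen_pi_iff] at hVV
  obtain ⟨I, uu, hI, hsub⟩ := hVV x.1 hxV
  refine ⟨(I.sup id) + 1, fun y hy => ?_⟩
  have hmem : y.1 ∈ VV := by
    apply hsub
    intro i hi
    have h1 : y.1 i = x.1 i := hy i (by
      have := Finset.le_sup (f := id) hi
      simp at this
      omega)
    rw [h1]
    exact (hI i hi).2
  rw [← hVU]
  exact hmem

lemma unif {D : Type*} [TopologicalSpace D] [DiscreteTopology D]
    (f : ShiftSpace M → D) (hf : Continuous f) :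
    ∃ w, ∀ x y : ShiftSpace M, (∀ j < w, x.1 j = y.1 j) → f x = f y := by
  have h1 : ∀ x : ShiftSpace M, ∃ w, ∀ y, (∀ j < w, y.1 j = x.1 j) → f y = f x := by
    intro x
    have hop : IsOpen (f ⁻¹' {f x}) := (isOpen_discrete _).preimage hf
    obtain ⟨w, hw⟩ := nbhd hop rfl
    exact ⟨w, fun y hy => hw y hy⟩
  choose wof hwof using h1
  have hopen : ∀ x : ShiftSpace M, IsOpen {y : ShiftSpace M | ∀ j < wof x, y.1 j = x.1 j} := by
    intro x
    have heq : {y : ShiftSpace M | ∀ j < wof x, y.1 j = x.1 j} =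
        ⋂ j ∈ Finset.range (wof x), {y : ShiftSpace M | y.1 j = x.1 j} := by
      ext y; simp [Finset.mem_range]
    rw [heq]
    refine Set.Finite.isOpen_biInter (Finset.finite_toSet _) fun j _ => ?_
    show IsOpen ((fun y : ShiftSpace M => y.1 j) ⁻¹' {x.1 j})
    exact (isOpen_discrete _).preimage (continuous_coord j)
  have hcover : (Set.univ : Set (ShiftSpace M)) ⊆
      ⋃ x : ShiftSpace M, {y | ∀ j < wof x, y.1 j = x.1 j} :=
    fun x _ => Set.mem_iUnion.mpr ⟨x, fun j _ => rfl⟩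
  obtain ⟨s, hs⟩ := isCompact_univ.elim_finite_subcover _ hopen hcover
  refine ⟨(s.sup wof) + 1, fun x y hxy => ?_⟩
  have hmem := hs (Set.mem_univ x)
  rw [Set.mem_iUnion₂] at hmem
  obtain ⟨x₀, hx₀s, hx₀⟩ := hmem
  have hfx : f x = f x₀ := hwof x₀ x hx₀
  have hfy : f y = f x₀ := by
    refine hwof x₀ y (fun j hj => ?_)
    rw [← hxy j (by have := Finset.le_sup (f := wof) hx₀s; omega)]
    exact hx₀ j hj
  rw [hfx, hfy]

lemma continuous_shiftMap : Continuous (shiftMap M) := by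
  apply Continuous.subtype_mk
  exact continuous_pi fun i => continuous_coord (i + 1)
lemma sum_fiber' {α : Type*} [Fintype α] (Q0 : α → Prop) [DecidablePred Q0]
    (g0 : α → Fin k) (f : Fin k → ℕ) :
    ∑ a ∈ Finset.univ.filter Q0, f (g0 a) = ∑ u, Nat.card {a // Q0 a ∧ g0 a = u} * f u := by
  classical
  rw [← Finset.sum_fiberwise (Finset.univ.filter Q0) g0 (fun a => f (g0 a))]
  refine Finset.sum_congr rfl fun u _ => ?_
  have hc : ∀ a ∈ (Finset.univ.filter Q0).filter (fun a => g0 a = u), f (g0 a) = f u := by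
    intro a ha
    rw [Finset.mem_filter] at ha
    rw [ha.2]
  rw [Finset.sum_congr rfl hc, Finset.sum_const, Finset.filter_filter, smul_eq_mul]
  congr 1
  rw [Nat.card_eq_fintype_card, Fintype.card_subtype]

lemma cnt_def (T : ℕ) (U : Set (ShiftSpace M)) (u : Fin k) :
    Cnt M T U u =
      Nat.card {p : Fin (T + 1) → EdgeType M // (∃ x ∈ U, Ext p x) ∧ EndV p = u} := rfl

lemma shift_image_cyl {T : ℕ} (q : Fin (T + 1) → EdgeType M) (hq : Comp q) :
    (shiftMap M)^[T + 1] '' {y | Ext q y} = {z : ShiftSpace M | (z.1 0).1 = EndV q} := by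
  ext z
  constructor
  · rintro ⟨y, hy, rfl⟩
    show (((shiftMap M)^[T + 1] y).1 0).1 = EndV q
    rw [iter_coord]
    have h5 := y.2 T
    have h6 : y.1 T = q (Fin.last T) := hy (Fin.last T)
    have h7 : y.1 (T + 1 + 0) = y.1 (T + 1) := congrArg y.1 (by omega)
    rw [h7, ← h5, h6]
    rfl
  · intro hz
    exact ⟨glue q z hq hz, glue_ext _ _ _ _, glue_shift _ _ _ _⟩

lemma rel_of_base {a b : ℕ} {P : Matrix (Fin a) (Fin a) ℕ} {Q : Matrix (Fin b) (Fin b) ℕ}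
    (g : ShiftSpace P → ShiftSpace Q) (l : ℕ)
    (hbase : ∀ (x : ShiftSpace P) (j : ℕ),
      (g (shiftMap P x)).1 (l + j) = (g x).1 (l + 1 + j)) :
    ∀ (aa : ℕ) (x : ShiftSpace P) (j : ℕ),
      (g ((shiftMap P)^[aa] x)).1 (l + j) = (g x).1 (l + aa + j) := by
  intro aa
  induction aa with
  | zero =>
    intro x j
    rw [Function.iterate_zero_apply]
    exact congrArg (g x).1 (by omega)
  | succ aa ih =>
    intro x j
    rw [Function.iterate_succ_apply]
    calc (g ((shiftMap P)^[aa] (shiftMap P x))).1 (l + j)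
        = (g (shiftMap P x)).1 (l + aa + j) := ih (shiftMap P x) j
      _ = (g (shiftMap P x)).1 (l + (aa + j)) := congrArg (g (shiftMap P x)).1 (by omega)
      _ = (g x).1 (l + 1 + (aa + j)) := hbase x (aa + j)
      _ = (g x).1 (l + (aa + 1) + j) := congrArg (g x).1 (by omega)
lemma key {a b : ℕ} {P : Matrix (Fin a) (Fin a) ℕ} {Q : Matrix (Fin b) (Fin b) ℕ}
    (hP : NoZeroRows P) (hQ : NoZeroRows Q)
    (g : ShiftSpace P → ShiftSpace Q) (g' : ShiftSpace Q → ShiftSpace P)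
    (hg'g : ∀ x, g' (g x) = x) (hgg' : ∀ y, g (g' y) = y)
    (l t0 s0 wg wg' : ℕ)
    (hrelg : ∀ (aa : ℕ) (x : ShiftSpace P) (j : ℕ),
      (g ((shiftMap P)^[aa] x)).1 (l + j) = (g x).1 (l + aa + j))
    (hrelg' : ∀ (aa : ℕ) (y : ShiftSpace Q) (j : ℕ),
      (g' ((shiftMap Q)^[aa] y)).1 (l + j) = (g' y).1 (l + aa + j))
    (hwg : ∀ (T : ℕ) (x y : ShiftSpace P), (∀ j < T + wg, x.1 j = y.1 j) →
      ∀ j < T, (g x).1 j = (g y).1 j)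
    (hwg' : ∀ (T : ℕ) (y y' : ShiftSpace Q), (∀ j < T + wg', y.1 j = y'.1 j) →
      ∀ j < T, (g' y).1 j = (g' y').1 j)
    (hk1 : l ≤ t0) (hk1' : l ≤ s0) (hk2 : wg' + 1 ≤ t0 + 1)
    (hk3 : l + wg + wg' + 1 ≤ t0 + 2) (hk4 : wg ≤ s0 + 1) (hk5 : l + wg + wg' ≤ s0 + 1) :
    (∀ i u, ∑ j, P i j * Cnt Q t0 (g '' {x : ShiftSpace P | (x.1 0).1 = j}) u
        = ∑ v, Cnt Q t0 (g '' {x : ShiftSpace P | (x.1 0).1 = i}) v * Q v u) ∧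
    (∀ i i', (P ^ (s0 + t0 + 2)) i i'
        = ∑ u, Cnt Q t0 (g '' {x : ShiftSpace P | (x.1 0).1 = i}) u
            * Cnt P s0 (g' '' {y : ShiftSpace Q | (y.1 0).1 = u}) i') := by
  classical
  have H1 : ∀ (S : Set (ShiftSpace P)) (y : ShiftSpace Q), y ∈ g '' S ↔ g' y ∈ S := by
    intro S y
    constructor
    · rintro ⟨x, hx, rfl⟩
      rw [hg'g]
      exact hx
    · intro hy
      exact ⟨g' y, hy, hgg' y⟩
  have H1' : ∀ (S : Set (ShiftSpace Q)) (x : ShiftSpace P), x ∈ g' '' S ↔ g x ∈ S := by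
    intro S x
    constructor
    · rintro ⟨y, hy, rfl⟩
      rw [hgg']
      exact hy
    · intro hx
      exact ⟨g x, hx, hg'g x⟩
  have Hinj : ∀ x x', g x = g x' → x = x' := by
    intro x x' e
    rw [← hg'g x, e, hg'g]
  have Hinj' : ∀ y y', g' y = g' y' → y = y' := by
    intro y y' e
    rw [← hgg' y, e, hgg']
  have htailTh : ∀ (y : ShiftSpace Q) (j : ℕ),
      (g (shiftMap P (g' y))).1 (l + j) = y.1 (l + 1 + j) := by
    intro y j
    have h0 := hrelg 1 (g' y) j
    rw [Function.iterate_one] at h0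
    rw [h0, hgg']
  have htailTh' : ∀ (x : ShiftSpace P) (j : ℕ),
      (g' ((shiftMap Q)^[t0 + 1] (g x))).1 (l + j) = x.1 (l + (t0 + 1) + j) := by
    intro x j
    rw [hrelg' (t0 + 1) (g x) j, hg'g]
  have hpreTh : ∀ (y y' : ShiftSpace Q), (∀ j < t0 + 2, y.1 j = y'.1 j) →
      ∀ j < l, (g (shiftMap P (g' y))).1 j = (g (shiftMap P (g' y'))).1 j := by
    intro y y' hyy j hj
    refine hwg l (shiftMap P (g' y)) (shiftMap P (g' y')) ?_ j hj
    intro j0 hj0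
    show (g' y).1 (j0 + 1) = (g' y').1 (j0 + 1)
    exact hwg' (1 + l + wg) y y' (fun j1 hj1 => hyy j1 (by omega)) (j0 + 1) (by omega)
  have hpreTh' : ∀ (x x' : ShiftSpace P), (∀ j < s0 + t0 + 2, x.1 j = x'.1 j) →
      ∀ j < l, (g' ((shiftMap Q)^[t0 + 1] (g x))).1 j
        = (g' ((shiftMap Q)^[t0 + 1] (g x'))).1 j := by
    intro x x' hxx j hj
    refine hwg' l _ _ ?_ j hj
    intro j0 hj0
    rw [iter_coord, iter_coord]
    exact hwg (t0 + 1 + l + wg') x x' (fun j1 hj1 => hxx j1 (by omega)) (t0 + 1 + j0) (by omega)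
  have hdetX : ∀ (i : Fin a) (T : ℕ), 1 + wg' ≤ T →
      Det T (g '' {x : ShiftSpace P | (x.1 0).1 = i}) := by
    intro i T hT y y' hyy hy
    rw [H1] at hy ⊢
    show ((g' y').1 0).1 = i
    rw [← hwg' 1 y y' (fun j0 hj0 => hyy j0 (by omega)) 0 (by omega)]
    exact hy
  have hdetC1 : ∀ (e : EdgeType P) (T : ℕ), 1 + wg' ≤ T →
      Det T (g '' {y : ShiftSpace P | Ext (fun _ : Fin 1 => e) y}) := by
    intro e T hT y y' hyy hy
    rw [H1] at hy ⊢
    intro j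
    have h0 := hwg' 1 y y' (fun j0 hj0 => hyy j0 (by omega)) 0 (by omega)
    have hj0 : (j : ℕ) = 0 := by omega
    calc (g' y').1 (j : ℕ) = (g' y').1 0 := congrArg (g' y').1 hj0
      _ = (g' y).1 0 := h0.symm
      _ = (g' y).1 (j : ℕ) := congrArg (g' y).1 hj0.symm
      _ = e := hy j
  have hdetCyl : ∀ (q : Fin (t0 + 1) → EdgeType Q) (T : ℕ), (t0 + 1) + wg ≤ T →
      Det T (g' '' {y : ShiftSpace Q | Ext q y}) := by
    intro q T hT x x' hxx hx
    rw [H1'] at hx ⊢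
    intro j
    rw [← hwg (t0 + 1) x x' (fun j0 hj0 => hxx j0 (by omega)) j j.isLt]
    exact hx j
  constructor
  · -- out1
    intro i u
    have hdet1 : Det (t0 + 1) (g '' {x : ShiftSpace P | (x.1 0).1 = i}) :=
      hdetX i (t0 + 1) (by omega)
    rw [← cnt_succ hQ hdet1 u]
    have hpart : g '' {x : ShiftSpace P | (x.1 0).1 = i} =
        ⋃ e ∈ Finset.univ.filter (fun e : EdgeType P => e.1 = i),
          g '' {y : ShiftSpace P | Ext (fun _ : Fin 1 => e) y} := by
      ext y
      rw [Set.mem_iUnion₂, H1]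
      constructor
      · intro hy
        refine ⟨(g' y).1 0, ?_, ?_⟩
        · rw [Finset.mem_filter]; exact ⟨Finset.mem_univ _, hy⟩
        · rw [H1]
          intro j
          exact congrArg (g' y).1 (by omega : (j : ℕ) = 0)
      · rintro ⟨e, he, hy⟩
        rw [H1] at hy
        rw [Finset.mem_filter] at he
        show ((g' y).1 0).1 = i
        rw [show (g' y).1 0 = e from hy ⟨0, by omega⟩]
        exact he.2
    have hdisj : ∀ e ∈ Finset.univ.filter (fun e : EdgeType P => e.1 = i),
        ∀ e' ∈ Finset.univ.filter (fun e : EdgeType P => e.1 = i), e ≠ e' →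
        Disjoint (g '' {y : ShiftSpace P | Ext (fun _ : Fin 1 => e) y})
          (g '' {y : ShiftSpace P | Ext (fun _ : Fin 1 => e') y}) := by
      intro e _ e' _ hee
      rw [Set.disjoint_left]
      intro y hy hy'
      rw [H1] at hy hy'
      exact hee (((hy ⟨0, by omega⟩).symm.trans (hy' ⟨0, by omega⟩) : e = e'))
    rw [cnt_congr hpart, cnt_biUnion _ _ (fun e => hdetC1 e (t0 + 2) (by omega)) hdisj u]
    have hstep : ∀ e ∈ Finset.univ.filter (fun e : EdgeType P => e.1 = i),
        Cnt Q (t0 + 1) (g '' {y : ShiftSpace P | Ext (fun _ : Fin 1 => e) y}) u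
          = Cnt Q t0 (g '' {x : ShiftSpace P | (x.1 0).1 = e.2.1}) u := by
      intro e _
      have hinjTh : Set.InjOn (fun y => g (shiftMap P (g' y)))
          (g '' {y : ShiftSpace P | Ext (fun _ : Fin 1 => e) y}) := by
        intro y hy y' hy' hee
        have h1 : shiftMap P (g' y) = shiftMap P (g' y') := Hinj _ _ hee
        rw [H1] at hy hy'
        have h2 : g' y = g' y' := by
          refine pt_ext_iter (T := 1) (fun j hj => ?_) ?_
          · have hj0 : j = 0 := by omega
            subst hj0
            rw [show (g' y).1 0 = e from hy ⟨0, by omega⟩,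
              show (g' y').1 0 = e from hy' ⟨0, by omega⟩]
          · exact h1
        exact Hinj' _ _ h2
      have himg : (fun y => g (shiftMap P (g' y))) ''
          (g '' {y : ShiftSpace P | Ext (fun _ : Fin 1 => e) y})
          = g '' {x : ShiftSpace P | (x.1 0).1 = e.2.1} := by
        rw [Set.image_image]
        have hcongr : ∀ x ∈ {y : ShiftSpace P | Ext (fun _ : Fin 1 => e) y},
            g (shiftMap P (g' (g x))) = g (shiftMap P x) := by
          intro x _
          rw [hg'g]
        rw [Set.image_congr hcongr,
          show (fun x => g (shiftMap P x)) '' {y : ShiftSpace P | Ext (fun _ : Fin 1 => e) y}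
            = g '' (shiftMap P '' {y : ShiftSpace P | Ext (fun _ : Fin 1 => e) y}) from
            (Set.image_image _ _ _).symm]
        have hshift : shiftMap P '' {y : ShiftSpace P | Ext (fun _ : Fin 1 => e) y}
            = {z : ShiftSpace P | (z.1 0).1 = e.2.1} := by
          have h8 : Comp (fun _ : Fin 1 => e) := by intro j hj; omega
          have h9 := shift_image_cyl (fun _ : Fin 1 => e) h8
          rw [show (shiftMap P)^[0 + 1] = shiftMap P from by
            rw [Function.iterate_one]] at h9
          exact h9
        rw [hshift]
      have hc := cnt_image (M := Q) (fun y => g (shiftMap P (g' y)))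
        l 1 (t0 + 1) (by omega) hinjTh
        (fun y _ j => htailTh y j)
        (hdetC1 e (t0 + 2) (by omega))
        (fun y hy y' hy' hyy => hpreTh y y' hyy) u
      rw [show t0 + 1 - 1 = t0 from rfl, himg] at hc
      exact hc.symm
    rw [Finset.sum_congr rfl hstep,
      sum_fiber' (fun e : EdgeType P => e.1 = i) (fun e => e.2.1)
        (fun j => Cnt Q t0 (g '' {x : ShiftSpace P | (x.1 0).1 = j}) u)]
    refine Finset.sum_congr rfl fun j _ => ?_
    rw [card_edge]
  · -- out2
    intro i i'
    rw [← cnt_vtx hP (s0 + t0 + 1) i i']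
    have hpart2 : {x : ShiftSpace P | (x.1 0).1 = i} =
        ⋃ q ∈ Finset.univ.filter (fun q : Fin (t0 + 1) → EdgeType Q =>
            ∃ y ∈ g '' {x : ShiftSpace P | (x.1 0).1 = i}, Ext q y),
          g' '' {y : ShiftSpace Q | Ext q y} := by
      ext x
      rw [Set.mem_iUnion₂]
      constructor
      · intro hx
        refine ⟨fun j : Fin (t0 + 1) => (g x).1 j, ?_, ?_⟩
        · rw [Finset.mem_filter]
          exact ⟨Finset.mem_univ _, ⟨g x, ⟨x, hx, rfl⟩, fun j => rfl⟩⟩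
        · rw [H1']
          exact fun j => rfl
      · rintro ⟨q, hq, hx⟩
        rw [Finset.mem_filter] at hq
        obtain ⟨-, y0, hy0, hy0q⟩ := hq
        rw [H1'] at hx
        have hmem : g x ∈ g '' {x : ShiftSpace P | (x.1 0).1 = i} := by
          refine hdetX i (t0 + 1) (by omega) y0 (g x) (fun j hj => ?_) hy0
          rw [hy0q ⟨j, hj⟩, hx ⟨j, hj⟩]
        rw [H1] at hmem
        rw [hg'g] at hmem
        exact hmem
    have hdisj2 : ∀ q ∈ Finset.univ.filter (fun q : Fin (t0 + 1) → EdgeType Q =>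
          ∃ y ∈ g '' {x : ShiftSpace P | (x.1 0).1 = i}, Ext q y),
        ∀ q' ∈ Finset.univ.filter (fun q : Fin (t0 + 1) → EdgeType Q =>
          ∃ y ∈ g '' {x : ShiftSpace P | (x.1 0).1 = i}, Ext q y), q ≠ q' →
        Disjoint (g' '' {y : ShiftSpace Q | Ext q y}) (g' '' {y : ShiftSpace Q | Ext q' y}) := by
      intro q _ q' _ hqq
      rw [Set.disjoint_left]
      intro x hx hx'
      rw [H1'] at hx hx'
      refine hqq ?_
      funext j
      rw [← hx j, ← hx' j]
    rw [cnt_congr hpart2,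
      cnt_biUnion _ _ (fun q => hdetCyl q (s0 + t0 + 2) (by omega)) hdisj2 i']
    have hstep2 : ∀ q ∈ Finset.univ.filter (fun q : Fin (t0 + 1) → EdgeType Q =>
          ∃ y ∈ g '' {x : ShiftSpace P | (x.1 0).1 = i}, Ext q y),
        Cnt P (s0 + t0 + 1) (g' '' {y : ShiftSpace Q | Ext q y}) i'
          = Cnt P s0 (g' '' {y : ShiftSpace Q | (y.1 0).1 = EndV q}) i' := by
      intro q hq
      rw [Finset.mem_filter] at hq
      obtain ⟨-, y0, hy0, hy0q⟩ := hq
      have hcompq : Comp q := comp_of_ext hy0q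
      have hinjTh' : Set.InjOn (fun x => g' ((shiftMap Q)^[t0 + 1] (g x)))
          (g' '' {y : ShiftSpace Q | Ext q y}) := by
        intro x hx x' hx' hee
        rw [H1'] at hx hx'
        have h1 : (shiftMap Q)^[t0 + 1] (g x) = (shiftMap Q)^[t0 + 1] (g x') :=
          Hinj' _ _ hee
        have h2 : g x = g x' := by
          refine pt_ext_iter (T := t0 + 1) (fun j hj => ?_) h1
          rw [show (g x).1 j = q ⟨j, hj⟩ from hx ⟨j, hj⟩,
            show (g x').1 j = q ⟨j, hj⟩ from hx' ⟨j, hj⟩]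
        exact Hinj _ _ h2
      have himgq : (fun x => g' ((shiftMap Q)^[t0 + 1] (g x))) ''
          (g' '' {y : ShiftSpace Q | Ext q y})
          = g' '' {y : ShiftSpace Q | (y.1 0).1 = EndV q} := by
        rw [Set.image_image]
        have hcongr : ∀ y ∈ {y : ShiftSpace Q | Ext q y},
            g' ((shiftMap Q)^[t0 + 1] (g (g' y))) = g' ((shiftMap Q)^[t0 + 1] y) := by
          intro y _
          rw [hgg']
        rw [Set.image_congr hcongr,
          show (fun y => g' ((shiftMap Q)^[t0 + 1] y)) '' {y : ShiftSpace Q | Ext q y}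
            = g' '' ((shiftMap Q)^[t0 + 1] '' {y : ShiftSpace Q | Ext q y}) from
            (Set.image_image _ _ _).symm,
          shift_image_cyl q hcompq]
      have hc := cnt_image (M := P) (fun x => g' ((shiftMap Q)^[t0 + 1] (g x)))
        l (t0 + 1) (s0 + t0 + 1) (by omega) hinjTh'
        (fun x _ j => htailTh' x j)
        (hdetCyl q (s0 + t0 + 2) (by omega))
        (fun x hx x' hx' hxx => hpreTh' x x' hxx) i'
      rw [show s0 + t0 + 1 - (t0 + 1) = s0 from by omega, himgq] at hc
      exact hc.symm
    rw [Finset.sum_congr rfl hstep2,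
      sum_fiber' (fun q : Fin (t0 + 1) → EdgeType Q =>
          ∃ y ∈ g '' {x : ShiftSpace P | (x.1 0).1 = i}, Ext q y) (fun q => EndV q)
        (fun u => Cnt P s0 (g' '' {y : ShiftSpace Q | (y.1 0).1 = u}) i')]
    exact Finset.sum_congr rfl fun u _ => rfl
lemma window_of_rel {a b : ℕ} {P : Matrix (Fin a) (Fin a) ℕ} {Q : Matrix (Fin b) (Fin b) ℕ}
    (g : ShiftSpace P → ShiftSpace Q) (hg : Continuous g) (l : ℕ)
    (hrel : ∀ (aa : ℕ) (x : ShiftSpace P) (j : ℕ),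
      (g ((shiftMap P)^[aa] x)).1 (l + j) = (g x).1 (l + aa + j)) :
    ∃ w, ∀ (T : ℕ) (x y : ShiftSpace P), (∀ j < T + w, x.1 j = y.1 j) →
      ∀ j < T, (g x).1 j = (g y).1 j := by
  obtain ⟨w1, hw1⟩ := unif (fun x : ShiftSpace P => (fun j : Fin (l + 1) => (g x).1 j))
    (continuous_pi fun j => (continuous_coord (j : ℕ)).comp hg)
  refine ⟨w1 + l + 1, fun T x y hxy j hj => ?_⟩
  rcases le_or_gt j l with hjl | hjl
  · have e0 := congrFun (hw1 x y (fun j0 hj0 => hxy j0 (by omega))) ⟨j, by omega⟩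
    exact e0
  · have agree : ∀ j0 < w1, ((shiftMap P)^[j - l] x).1 j0 = ((shiftMap P)^[j - l] y).1 j0 := by
      intro j0 hj0
      rw [iter_coord, iter_coord]
      exact hxy (j - l + j0) (by omega)
    have e3 : (g ((shiftMap P)^[j - l] x)).1 l = (g ((shiftMap P)^[j - l] y)).1 l :=
      congrFun (hw1 _ _ agree) ⟨l, by omega⟩
    calc (g x).1 j = (g x).1 (l + (j - l) + 0) := congrArg (g x).1 (by omega)
      _ = (g ((shiftMap P)^[j - l] x)).1 (l + 0) := (hrel (j - l) x 0).symm
      _ = (g ((shiftMap P)^[j - l] x)).1 l := congrArg _ (by omega)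
      _ = (g ((shiftMap P)^[j - l] y)).1 l := e3
      _ = (g ((shiftMap P)^[j - l] y)).1 (l + 0) := congrArg _ (by omega)
      _ = (g y).1 (l + (j - l) + 0) := hrel (j - l) y 0
      _ = (g y).1 j := congrArg (g y).1 (by omega)

end SE

/-- **Statement 11.** If the one-sided edge shifts of `A` and `B` (no zero rows) are
Matsumoto eventually conjugate, then `A` and `B` are unitally shift equivalent. -/
theorem matsumotoEventualConjugacy_implies_unitallyShiftEquivalent
    {n m : ℕ} (A : Matrix (Fin n) (Fin n) ℕ) (B : Matrix (Fin m) (Fin m) ℕ)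
    (hA : NoZeroRows A) (hB : NoZeroRows B)
    (h : ∃ (h : ShiftSpace A ≃ₜ ShiftSpace B) (l : ℕ),
      (∀ x : ShiftSpace A,
        (shiftMap B)^[l + 1] (h x) = (shiftMap B)^[l] (h (shiftMap A x))) ∧
      (∀ y : ShiftSpace B,
        (shiftMap A)^[l + 1] (h.symm y) = (shiftMap A)^[l] (h.symm (shiftMap B y)))) :
    UnitallyShiftEquivalent A B := by
  classical
  obtain ⟨h, l, hl1, hl2⟩ := h
  have base1 : ∀ (x : ShiftSpace A) (j : ℕ),
      (h (shiftMap A x)).1 (l + j) = (h x).1 (l + 1 + j) := by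
    intro x j
    have e := congrArg (fun z : ShiftSpace B => z.1 j) (hl1 x)
    simp only [SE.iter_coord] at e
    exact e.symm
  have base2 : ∀ (y : ShiftSpace B) (j : ℕ),
      (h.symm (shiftMap B y)).1 (l + j) = (h.symm y).1 (l + 1 + j) := by
    intro y j
    have e := congrArg (fun z : ShiftSpace A => z.1 j) (hl2 y)
    simp only [SE.iter_coord] at e
    exact e.symm
  have rel1 := SE.rel_of_base (⇑h) l base1
  have rel2 := SE.rel_of_base (⇑h.symm) l base2
  obtain ⟨wh, hwh⟩ := SE.window_of_rel (⇑h) h.continuous l rel1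
  obtain ⟨wh', hwh'⟩ := SE.window_of_rel (⇑h.symm) h.symm.continuous l rel2
  set t0 := l + wh + wh' + 1 with ht0
  set s0 := 2 * t0 + 1 with hs0
  obtain ⟨out1, out2⟩ := SE.key hA hB (⇑h) (⇑h.symm)
    (fun x => h.symm_apply_apply x) (fun y => h.apply_symm_apply y)
    l t0 s0 wh wh' rel1 rel2 hwh hwh'
    (by omega) (by omega) (by omega) (by omega) (by omega) (by omega)
  obtain ⟨out1', out2'⟩ := SE.key hB hA (⇑h.symm) (⇑h)
    (fun y => h.apply_symm_apply y) (fun x => h.symm_apply_apply x)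
    l s0 t0 wh' wh rel2 rel1 hwh' hwh
    (by omega) (by omega) (by omega) (by omega) (by omega) (by omega)
  refine ⟨s0 + t0 + 2,
    (fun i u => SE.Cnt B t0 (⇑h '' {x : ShiftSpace A | (x.1 0).1 = i}) u),
    (fun u i => SE.Cnt A s0 (⇑h.symm '' {y : ShiftSpace B | (y.1 0).1 = u}) i),
    ⟨⟨by omega, ?_, ?_, ?_, ?_⟩, 0, t0 + 1, ?_⟩⟩
  · -- A ^ lag = R * S
    refine Matrix.ext fun i i' => ?_
    refine Eq.trans ?_ Matrix.mul_apply.symm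
    exact out2 i i'
  · -- B ^ lag = S * R
    refine Matrix.ext fun u u' => ?_
    refine Eq.trans ?_ Matrix.mul_apply.symm
    have harith : t0 + s0 + 2 = s0 + t0 + 2 := by omega
    rw [← harith]
    exact out2' u u'
  · -- A * R = R * B
    refine Matrix.ext fun i u => ?_
    refine Matrix.mul_apply.trans (Eq.trans ?_ Matrix.mul_apply.symm)
    exact out1 i u
  · -- B * S = S * A
    refine Matrix.ext fun u i => ?_
    refine Matrix.mul_apply.trans (Eq.trans ?_ Matrix.mul_apply.symm)
    exact out1' u i
  · -- unital
    have hmemchar : ∀ (i : Fin n) (y : ShiftSpace B),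
        y ∈ ⇑h '' {x : ShiftSpace A | (x.1 0).1 = i} ↔ ((h.symm y).1 0).1 = i := by
      intro i y
      constructor
      · rintro ⟨x, hx, rfl⟩
        rw [h.symm_apply_apply]
        exact hx
      · intro hy
        exact ⟨h.symm y, hy, h.apply_symm_apply y⟩
    have hdetp : ∀ i : Fin n, SE.Det (t0 + 1) (⇑h '' {x : ShiftSpace A | (x.1 0).1 = i}) := by
      intro i y y' hyy hy
      rw [hmemchar] at hy ⊢
      rw [← hwh' 1 y y' (fun j0 hj0 => hyy j0 (by omega)) 0 (by omega)]
      exact hy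
    have hdisjp : ∀ i ∈ (Finset.univ : Finset (Fin n)), ∀ i' ∈ (Finset.univ : Finset (Fin n)),
        i ≠ i' → Disjoint (⇑h '' {x : ShiftSpace A | (x.1 0).1 = i})
          (⇑h '' {x : ShiftSpace A | (x.1 0).1 = i'}) := by
      intro i _ i' _ hii
      rw [Set.disjoint_left]
      intro y hy hy'
      rw [hmemchar] at hy hy'
      exact hii (hy ▸ hy')
    have hpart : (Set.univ : Set (ShiftSpace B)) =
        ⋃ i ∈ (Finset.univ : Finset (Fin n)), ⇑h '' {x : ShiftSpace A | (x.1 0).1 = i} := by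
      ext y
      simp only [Set.mem_univ, true_iff, Set.mem_iUnion]
      exact ⟨((h.symm y).1 0).1, Finset.mem_univ _, (hmemchar _ y).mpr rfl⟩
    have hRsum : ∀ u, ∑ i, SE.Cnt B t0 (⇑h '' {x : ShiftSpace A | (x.1 0).1 = i}) u
        = ∑ v, (B ^ (t0 + 1)) v u := by
      intro u
      rw [← SE.cnt_biUnion Finset.univ _ (fun i => hdetp i) hdisjp u, ← SE.cnt_congr hpart u,
        SE.cnt_univ hB t0 u]
    rw [pow_zero, Matrix.one_mulVec, zero_add, ← Matrix.transpose_pow]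
    funext u
    simp only [Matrix.mulVec, dotProduct, Matrix.transpose_apply, mul_one]
    exact hRsum u
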